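/- arXiv:2005.07803 — 3 statements merged into one kernel-verified Lean document; each statement's English description precedes it below -/
import Mathlib

section
/- Let M be a Hermitian positive semidefinite block matrix [[A, B],[B^H, C]] where A and C are square. If A = x x^H for some vector x, then there exists a vector y such that B = x y^H. -/
open Matrix
open scoped ComplexOrder

/-- If `M = [[A, B],[Bᴴ, C]]` is positive semidefinite (hence Hermitian) and
`A = x xᴴ` for some vector `x`, then `B = x yᴴ` for some vector `y`. -/
theorem stmt_0 {m n : ℕ} (A : Matrix (Fin m) (Fin m) ℂ) (B : Matrix (Fin m) (Fin n) ℂ)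
    (C : Matrix (Fin n) (Fin n) ℂ) (x : Fin m → ℂ)
    (hM : (Matrix.fromBlocks A B Bᴴ C).PosSemidef)
    (hA : A = Matrix.vecMulVec x (star x)) :
    ∃ y : Fin n → ℂ, B = Matrix.vecMulVec x (star y) := by
  -- Key claim: if `u ⟂ x` then `Bᴴ *ᵥ u = 0`.
  have key : ∀ u : Fin m → ℂ, star x ⬝ᵥ u = 0 → Bᴴ *ᵥ u = 0 := by
    intro u hu
    set z : Fin m ⊕ Fin n → ℂ := Sum.elim u 0 with hz
    have hAu : A *ᵥ u = 0 := by
      ext i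
      have h1 : (A *ᵥ u) i = x i * (star x ⬝ᵥ u) := by
        simp [hA, mulVec, dotProduct, vecMulVec_apply, Finset.mul_sum, mul_assoc]
      simp [h1, hu]
    have hMz : (Matrix.fromBlocks A B Bᴴ C) *ᵥ z = 0 := by
      rw [← hM.dotProduct_mulVec_zero_iff]
      rw [fromBlocks_mulVec]
      have h1 : z ∘ Sum.inl = u := rfl
      have h2 : z ∘ Sum.inr = (0 : Fin n → ℂ) := rfl
      rw [h1, h2]
      simp [hz, dotProduct, Fintype.sum_sum_type, hAu]
    ext j
    have h := congrFun hMz (Sum.inr j)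
    rw [fromBlocks_mulVec] at h
    have h1 : z ∘ Sum.inl = u := rfl
    have h2 : z ∘ Sum.inr = (0 : Fin n → ℂ) := rfl
    rw [h1, h2] at h
    simpa using h
  set s : ℂ := star x ⬝ᵥ x with hs
  have hs_star : star s = s := by
    simp [hs, dotProduct, star_sum, mul_comm]
  by_cases h0 : s = 0
  · -- then x = 0 and B = 0
    have hx : x = 0 := by
      exact (dotProduct_star_self_eq_zero (v := x)).mp (by rw [← hs]; exact h0)
    refine ⟨0, ?_⟩
    ext i j
    have hb := key (Pi.single i 1) (by simp [hx])
    have hc := congrFun hb j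
    have hBij : (star (B i j) : ℂ) = 0 := by
      simpa [mulVec, dotProduct, conjTranspose_apply, Pi.single_apply,
        Finset.sum_ite_eq'] using hc
    have hB0 : B i j = 0 := by simpa using congrArg star hBij
    simp [hB0, hx, vecMulVec_apply]
  · refine ⟨fun j => (Bᴴ *ᵥ x) j / s, ?_⟩
    ext i j
    set u : Fin m → ℂ := fun k => (if k = i then s else 0) - star (x i) * x k with hu
    have hrearr : ∀ k, star (x k) * (star (x i) * x k) = star (x i) * (star (x k) * x k) :=
      fun k => by ring
    have hside : star x ⬝ᵥ u = 0 := by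
      simp only [hu, dotProduct, Pi.star_apply, mul_sub, mul_ite, mul_zero,
        Finset.sum_sub_distrib, Finset.sum_ite_eq', Finset.mem_univ, if_true]
      rw [Finset.sum_congr rfl fun k _ => hrearr k, ← Finset.mul_sum]
      rw [show ∑ k, star (x k) * x k = s from rfl]
      ring
    have hb := key u hside
    have hc := congrFun hb j
    have hrearr2 : ∀ k, star (B k j) * (star (x i) * x k) = star (x i) * (star (B k j) * x k) :=
      fun k => by ring
    have heq : s * star (B i j) = star (x i) * (Bᴴ *ᵥ x) j := by
      have hc' : star (B i j) * s - ∑ k, star (x i) * (star (B k j) * x k) = 0 := by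
        have := hc
        simp only [hu, mulVec, dotProduct, conjTranspose_apply, mul_sub, mul_ite, mul_zero,
          Finset.sum_sub_distrib, Finset.sum_ite_eq', Finset.mem_univ, if_true,
          Pi.zero_apply] at this
        rwa [Finset.sum_congr rfl fun k _ => hrearr2 k] at this
      rw [← Finset.mul_sum] at hc'
      have he : (Bᴴ *ᵥ x) j = ∑ k, star (B k j) * x k := by
        simp [mulVec, dotProduct, conjTranspose_apply]
      rw [he]
      linear_combination hc'
    -- take star of both sides
    have heq' : s * B i j = x i * star ((Bᴴ *ᵥ x) j) := by
      have := congrArg star heq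
      simpa [hs_star, mul_comm] using this
    rw [vecMulVec_apply]
    have hy : star ((fun j => (Bᴴ *ᵥ x) j / s)) j = star ((Bᴴ *ᵥ x) j) / s := by
      simp only [Pi.star_apply, star_div₀]
      rw [hs_star]
    rw [hy]
    field_simp
    linear_combination heq'
end

section
/- Let M = [[x x^H, x y^H],[y x^H, C]] be Hermitian positive semidefinite with x ≠ 0. Then C - y y^H is positive semidefinite. -/
open Matrix
open scoped ComplexOrder

lemma vecMulVec_mulVec' {k l : ℕ} (w : Fin k → ℂ) (v u : Fin l → ℂ) :
    Matrix.vecMulVec w v *ᵥ u = (v ⬝ᵥ u) • w := by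
  funext i
  simp [Matrix.vecMulVec, Matrix.mulVec, dotProduct, Finset.mul_sum, mul_assoc,
    mul_comm, mul_left_comm]

/-- If `M = [[x xᴴ, x yᴴ],[y xᴴ, C]]` is positive semidefinite with `x ≠ 0` and `C`
Hermitian, then `C - y yᴴ` is positive semidefinite. -/
theorem stmt_1 {m n : ℕ} (x : Fin m → ℂ) (y : Fin n → ℂ) (C : Matrix (Fin n) (Fin n) ℂ)
    (hx : x ≠ 0) (hC : C.IsHermitian)
    (hM : (Matrix.fromBlocks (Matrix.vecMulVec x (star x)) (Matrix.vecMulVec x (star y))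
      (Matrix.vecMulVec y (star x)) C).PosSemidef) :
    (C - Matrix.vecMulVec y (star y)).PosSemidef := by
  have hN : (star x ⬝ᵥ x) ≠ 0 := fun h => hx (dotProduct_star_self_eq_zero.mp h)
  rw [Matrix.posSemidef_iff_dotProduct_mulVec]
  constructor
  · refine hC.sub ?_
    ext i j
    simp [Matrix.vecMulVec, Matrix.conjTranspose_apply, mul_comm]
  · intro v
    set N : ℂ := star x ⬝ᵥ x with hNdef
    have hNstar : star N = N := by
      simp [hNdef, dotProduct, Finset.sum_comm, mul_comm]
    set s : ℂ := star y ⬝ᵥ v with hs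
    set c : ℂ := -s / N with hc
    have key := hM.dotProduct_mulVec_nonneg (Sum.elim (c • x) v)
    have hstar : star (Sum.elim (c • x) v) = Sum.elim (star (c • x)) (star v) := by
      funext i; cases i <;> simp
    rw [hstar, Matrix.fromBlocks_mulVec, sumElim_dotProduct_sumElim,
      vecMulVec_mulVec', vecMulVec_mulVec', vecMulVec_mulVec'] at key
    have hsv : star v ⬝ᵥ y = star s := by
      simp [hs, dotProduct, mul_comm]
    have hsx : star (c • x) ⬝ᵥ x = star c * N := by
      simp [smul_dotProduct, hNdef, star_smul, smul_eq_mul]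
    have hxs : star x ⬝ᵥ (c • x) = c * N := by
      simp [dotProduct_smul, hNdef, smul_eq_mul]
    have hcN : c * N = -s := by
      rw [hc, div_mul_cancel₀ _ hN]
    have hcsN : star c * N = -(star s) := by
      have := congrArg star hcN
      simpa [hNstar, mul_comm] using this
    -- evaluate key
    simp only [Sum.elim_comp_inl, Sum.elim_comp_inr, smul_eq_mul, dotProduct_smul,
      ← hNdef, ← hs] at key
    simp only [dotProduct_add, dotProduct_smul, smul_eq_mul, hsx, hsv,
      hcN, hcsN] at key
    have hform : star v ⬝ᵥ ((C - Matrix.vecMulVec y (star y)) *ᵥ v)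
        = star v ⬝ᵥ (C *ᵥ v) - s * star s := by
      rw [Matrix.sub_mulVec, dotProduct_sub, vecMulVec_mulVec',
        dotProduct_smul, hsv, smul_eq_mul, ← hs]
    rw [hform]
    convert key using 1
    ring
end

section
/- Let M = [[x x^H, x y^H],[y x^H, C]] be Hermitian positive semidefinite with x ≠ 0. Then trace(M) ≥ x^H x + y^H y, with equality if and only if C = y y^H. -/
open Matrix
open scoped ComplexOrder

private lemma vecMulVec_mulVec'_s2 {m n : ℕ} (a : Fin m → ℂ) (b : Fin n → ℂ) (v : Fin n → ℂ) :
    Matrix.vecMulVec a b *ᵥ v = (b ⬝ᵥ v) • a := by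
  funext i
  simp only [Matrix.mulVec, Matrix.vecMulVec, Matrix.of_apply, dotProduct,
    Pi.smul_apply, smul_eq_mul, Finset.sum_mul]
  exact Finset.sum_congr rfl fun j _ => by ring

private lemma trace_vecMulVec' {n : ℕ} (a b : Fin n → ℂ) :
    (Matrix.vecMulVec a b).trace = a ⬝ᵥ b := by
  simp [Matrix.trace, Matrix.vecMulVec, Matrix.diag, dotProduct]

private lemma psd_trace {n : ℕ} (D : Matrix (Fin n) (Fin n) ℂ) (hD : D.PosSemidef) :
    0 ≤ D.trace ∧ (D.trace = 0 ↔ D = 0) := by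
  open scoped MatrixOrder Matrix.Norms.L2Operator in
  obtain ⟨B, rfl⟩ := CStarAlgebra.nonneg_iff_eq_star_mul_self.mp hD.nonneg
  simp only [star_eq_conjTranspose]
  have htr : (Bᴴ * B).trace = ∑ i, ∑ j, star (B j i) * B j i := by
    simp [Matrix.trace, Matrix.diag, Matrix.mul_apply, Matrix.conjTranspose_apply]
  have hnn : ∀ i ∈ Finset.univ, (0:ℂ) ≤ ∑ j, star (B j i) * B j i := fun i _ =>
    Finset.sum_nonneg fun j _ => star_mul_self_nonneg _
  constructor
  · rw [htr]; exact Finset.sum_nonneg hnn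
  constructor
  · intro h
    rw [htr] at h
    have hB : B = 0 := by
      ext j i
      have h1 := (Finset.sum_eq_zero_iff_of_nonneg hnn).mp h i (Finset.mem_univ i)
      have h2 := (Finset.sum_eq_zero_iff_of_nonneg
        (fun j _ => star_mul_self_nonneg (B j i))).mp h1 j (Finset.mem_univ j)
      simpa [Complex.star_def, Complex.mul_conj', Complex.normSq_eq_zero] using
        (by simpa using congrArg Complex.normSq h2 : Complex.normSq (star (B j i) * B j i) = 0)
    rw [hB]; simp
  · intro h; rw [h]; simp

/-- For `M = [[x xᴴ, x yᴴ],[y xᴴ, C]]` positive semidefinite with `x ≠ 0` and `C`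
Hermitian: `trace M ≥ xᴴx + yᴴy`, with equality iff `C = y yᴴ`. -/
theorem stmt_2 {m n : ℕ} (x : Fin m → ℂ) (y : Fin n → ℂ) (C : Matrix (Fin n) (Fin n) ℂ)
    (hx : x ≠ 0) (hC : C.IsHermitian)
    (hM : (Matrix.fromBlocks (Matrix.vecMulVec x (star x)) (Matrix.vecMulVec x (star y))
      (Matrix.vecMulVec y (star x)) C).PosSemidef) :
    star x ⬝ᵥ x + star y ⬝ᵥ y ≤ (Matrix.fromBlocks (Matrix.vecMulVec x (star x))
        (Matrix.vecMulVec x (star y)) (Matrix.vecMulVec y (star x)) C).trace ∧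
      ((Matrix.fromBlocks (Matrix.vecMulVec x (star x)) (Matrix.vecMulVec x (star y))
          (Matrix.vecMulVec y (star x)) C).trace = star x ⬝ᵥ x + star y ⬝ᵥ y ↔
        C = Matrix.vecMulVec y (star y)) := by
  set N : ℂ := star x ⬝ᵥ x with hNdef
  have hN : N ≠ 0 := fun h => hx (dotProduct_star_self_eq_zero.mp h)
  -- D := C - y yᴴ is PSD
  set D : Matrix (Fin n) (Fin n) ℂ := C - Matrix.vecMulVec y (star y) with hDdef
  have hyy : (Matrix.vecMulVec y (star y)).IsHermitian := by
    ext i j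
    simp [Matrix.conjTranspose_apply, Matrix.vecMulVec, mul_comm]
  have hDherm : D.IsHermitian := hC.sub hyy
  have hDpsd : D.PosSemidef := by
    refine .of_dotProduct_mulVec_nonneg hDherm fun v => ?_
    set t : ℂ := star y ⬝ᵥ v with htdef
    set u : Fin m → ℂ := (-t / N) • x with hudef
    have hxu : star x ⬝ᵥ u = -t := by
      rw [hudef, dotProduct_smul, ← hNdef, smul_eq_mul, div_mul_cancel₀ _ hN]
    have hux : star u ⬝ᵥ x = -(star t) := by
      rw [Matrix.star_dotProduct, hxu, star_neg]
    have key := hM.dotProduct_mulVec_nonneg (Sum.elim u v)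
    rw [Function.star_sumElim, Matrix.fromBlocks_mulVec,
      sumElim_dotProduct_sumElim] at key
    simp only [Sum.elim_comp_inl, Sum.elim_comp_inr] at key
    rw [vecMulVec_mulVec'_s2, vecMulVec_mulVec'_s2, vecMulVec_mulVec'_s2] at key

    have hvy : star v ⬝ᵥ y = star t := by
      rw [Matrix.star_dotProduct]
    simp only [dotProduct_add, dotProduct_smul, smul_eq_mul] at key
    rw [hux, hvy, hxu, ← htdef] at key
    have hDval : star v ⬝ᵥ (D *ᵥ v) = star v ⬝ᵥ (C *ᵥ v) - t * star t := by
      rw [hDdef, Matrix.sub_mulVec, dotProduct_sub, vecMulVec_mulVec'_s2,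
        dotProduct_smul, ← htdef, hvy, smul_eq_mul]
    convert key using 1
    rw [hDval]
    ring
  obtain ⟨htrD, htrD0⟩ := psd_trace D hDpsd
  have htrC : C.trace = D.trace + star y ⬝ᵥ y := by
    rw [hDdef, Matrix.trace_sub, trace_vecMulVec']
    rw [dotProduct_comm]
    ring
  have htrM : (Matrix.fromBlocks (Matrix.vecMulVec x (star x)) (Matrix.vecMulVec x (star y))
      (Matrix.vecMulVec y (star x)) C).trace = N + C.trace := by
    have : ∀ (A : Matrix (Fin m) (Fin m) ℂ) (B : Matrix (Fin m) (Fin n) ℂ)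
        (C' : Matrix (Fin n) (Fin m) ℂ) (D' : Matrix (Fin n) (Fin n) ℂ),
        (Matrix.fromBlocks A B C' D').trace = A.trace + D'.trace := fun A B C' D' => by
      simp [Matrix.trace, Matrix.diag, Fintype.sum_sum_type]
    rw [this, trace_vecMulVec', dotProduct_comm, hNdef]
  constructor
  · rw [htrM, htrC, hNdef]
    have : star x ⬝ᵥ x + star y ⬝ᵥ y = star x ⬝ᵥ x + (0 + star y ⬝ᵥ y) := by ring
    rw [this]
    exact add_le_add_right (add_le_add_left htrD _) _
  · rw [htrM, htrC]
    constructor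
    · intro h
      have hD0 : D.trace = 0 := by linear_combination h
      have := htrD0.mp hD0
      rw [hDdef] at this
      exact sub_eq_zero.mp this
    · intro h
      have : D = 0 := by rw [hDdef, h]; simp
      rw [htrD0.mpr this]
      ring
end
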